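/- Let φ ∈ (0,1), ω = e^{2πiφ}, α ∈ ℂ and β = iα. Suppose λ ∈ ℂ satisfies λ² = ω[(1−2ω+ω²) − i(1−ω+ω²)]/(1−2ω+2ω²) (the denominator 1−2ω+2ω² being nonzero), and define θ_s = (√2/λ)(−λ² + ω(1−i)/2). Then |λ| = 1, θ_s² = ω/(ω²−3ω+1−i(ω²−1)), and the pair Ψ^L, Ψ^R defined by Ψ(x) = (−θ_s)^x · (α, (1−ω)α+ωβ) for x ≥ 1, Ψ(0) = (α, β), and Ψ(x) = θ_s^{−x} · ((ω−1)β+ωα, β) for x ≤ −1, satisfies the eigenvalue equations of the Wojcik model with eigenvalue λ. -/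

import Mathlib

noncomputable section

/-- The coin phase of the Wojcik model: `ω` at the origin, `1` elsewhere. -/
def wojcikCoin (ω : ℂ) (x : ℤ) : ℂ := if x = 0 then ω else 1

/-- `ΨL, ΨR : ℤ → ℂ` satisfy the eigenvalue equations of the Wojcik model with
eigenvalue `lam` and phase `ω`. -/
def WojcikEigenEq (ω lam : ℂ) (ΨL ΨR : ℤ → ℂ) : Prop :=
  ∀ x : ℤ,
    lam * ΨL x = wojcikCoin ω (x + 1) / (Real.sqrt 2 : ℂ) * (ΨL (x + 1) + ΨR (x + 1)) ∧
    lam * ΨR x = wojcikCoin ω (x - 1) / (Real.sqrt 2 : ℂ) * (ΨL (x - 1) - ΨR (x - 1))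

/-- Left component of the explicit stationary state. -/
def wojcikPsiL (α β ω θ : ℂ) (x : ℤ) : ℂ :=
  if 1 ≤ x then (-θ) ^ x.toNat * α
  else if x = 0 then α
  else θ ^ (-x).toNat * ((ω - 1) * β + ω * α)

/-- Right component of the explicit stationary state. -/
def wojcikPsiR (α β ω θ : ℂ) (x : ℤ) : ℂ :=
  if 1 ≤ x then (-θ) ^ x.toNat * ((1 - ω) * α + ω * β)
  else if x = 0 then β
  else θ ^ (-x).toNat * β

lemma eigen_part (ω lam θ α β : ℂ) (hs0 : ((Real.sqrt 2 : ℝ) : ℂ) ≠ 0)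
    (hA : lam * α * (Real.sqrt 2 : ℂ) = -θ * (α + ((1 - ω) * α + ω * β)))
    (hB : lam * ((1 - ω) * α + ω * β) * (Real.sqrt 2 : ℂ) * (-θ) =
      α - ((1 - ω) * α + ω * β))
    (hC : lam * β * (Real.sqrt 2 : ℂ) = θ * (((ω - 1) * β + ω * α) - β))
    (hD : lam * θ * ((ω - 1) * β + ω * α) * (Real.sqrt 2 : ℂ) = ω * (α + β)) :
    WojcikEigenEq ω lam (wojcikPsiL α β ω θ) (wojcikPsiR α β ω θ) := by
  have hs : ((Real.sqrt 2 : ℝ) : ℂ) ≠ 0 := hs0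
  have hs : ((Real.sqrt 2 : ℝ) : ℂ) ≠ 0 := hs0
  intro x
  rcases x with n | n
  · rcases n with _ | m
    · constructor
      · show lam * wojcikPsiL α β ω θ 0 = _
        simp only [wojcikPsiL, wojcikPsiR, wojcikCoin]
        norm_num
        rw [inv_mul_eq_div, eq_div_iff hs]
        linear_combination hA
      · show lam * wojcikPsiR α β ω θ 0 = _
        simp only [wojcikPsiL, wojcikPsiR, wojcikCoin]
        norm_num
        rw [inv_mul_eq_div, eq_div_iff hs]
        linear_combination hC
    · rcases m with _ | k
      · constructor
        · show lam * wojcikPsiL α β ω θ 1 = _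
          simp only [wojcikPsiL, wojcikPsiR, wojcikCoin]
          norm_num [Int.toNat_natCast, show Int.toNat 2 = 2 from rfl]
          rw [inv_mul_eq_div, eq_div_iff hs]
          linear_combination (-θ) * hA
        · show lam * wojcikPsiR α β ω θ 1 = _
          simp only [wojcikPsiL, wojcikPsiR, wojcikCoin]
          norm_num [Int.toNat_natCast, show Int.toNat 2 = 2 from rfl]
          rw [div_mul_eq_mul_div, eq_div_iff hs]
          linear_combination hB
      · have e1 : (((k+1+1:ℕ):ℤ)).toNat = k + 2 := by omega
        have e2 : (((k+1+1:ℕ):ℤ) + 1).toNat = k + 3 := by omega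
        have e3 : (((k+1+1:ℕ):ℤ) - 1).toNat = k + 1 := by omega
        constructor
        · simp only [wojcikPsiL, wojcikPsiR, wojcikCoin, Int.ofNat_eq_coe]
          split_ifs
          all_goals try (exfalso; omega)
          rw [e1, e2, one_div, inv_mul_eq_div, eq_div_iff hs]
          linear_combination ((-θ) ^ (k+2)) * hA
        · simp only [wojcikPsiL, wojcikPsiR, wojcikCoin, Int.ofNat_eq_coe]
          split_ifs
          all_goals try (exfalso; omega)
          rw [e1, e3, one_div, inv_mul_eq_div, eq_div_iff hs]
          linear_combination ((-θ) ^ (k+1)) * hB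
  · rcases n with _ | k
    · constructor
      · show lam * wojcikPsiL α β ω θ (-1) = _
        simp only [wojcikPsiL, wojcikPsiR, wojcikCoin, show Int.negSucc 0 = -1 from rfl]
        norm_num
        rw [div_mul_eq_mul_div, eq_div_iff hs]
        linear_combination hD
      · show lam * wojcikPsiR α β ω θ (-1) = _
        simp only [wojcikPsiL, wojcikPsiR, wojcikCoin, show Int.negSucc 0 = -1 from rfl]
        norm_num [show Int.toNat 2 = 2 from rfl]
        rw [inv_mul_eq_div, eq_div_iff hs]
        linear_combination θ * hC
    · have e1 : (- -(((k+1:ℕ):ℤ) + 1)).toNat = k + 2 := by omega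
      have e2 : (-(-(((k+1:ℕ):ℤ) + 1) + 1)).toNat = k + 1 := by omega
      have e3 : (-(-(((k+1:ℕ):ℤ) + 1) - 1)).toNat = k + 3 := by omega
      constructor
      · simp only [wojcikPsiL, wojcikPsiR, wojcikCoin, Int.negSucc_eq]
        split_ifs
        all_goals try (exfalso; omega)
        rw [e1, e2, one_div, inv_mul_eq_div, eq_div_iff hs]
        linear_combination (θ ^ (k+1)) * hD
      · simp only [wojcikPsiL, wojcikPsiR, wojcikCoin, Int.negSucc_eq]
        split_ifs
        all_goals try (exfalso; omega)
        rw [e1, e3, one_div, inv_mul_eq_div, eq_div_iff hs]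
        linear_combination (θ ^ (k+2)) * hC

theorem wojcik_eigen_solution_beta_eq_i_alpha
    (φ : ℝ) (hφ : φ ∈ Set.Ioo (0 : ℝ) 1) (ω α β lam θ : ℂ)
    (hω : ω = Complex.exp (2 * (Real.pi : ℂ) * Complex.I * (φ : ℂ)))
    (hβ : β = Complex.I * α)
    (hden : 1 - 2 * ω + 2 * ω ^ 2 ≠ 0)
    (hlam : lam ^ 2 =
      ω * ((1 - 2 * ω + ω ^ 2) - Complex.I * (1 - ω + ω ^ 2)) / (1 - 2 * ω + 2 * ω ^ 2))
    (hθ : θ = (Real.sqrt 2 : ℂ) / lam * (-lam ^ 2 + ω * (1 - Complex.I) / 2)) :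
    ‖lam‖ = 1 ∧
    θ ^ 2 = ω / (ω ^ 2 - 3 * ω + 1 - Complex.I * (ω ^ 2 - 1)) ∧
    WojcikEigenEq ω lam (wojcikPsiL α β ω θ) (wojcikPsiR α β ω θ) := by

  have hs : ((Real.sqrt 2 : ℝ) : ℂ) ≠ 0 := by
    norm_cast
    positivity
  have hs2 : ((Real.sqrt 2 : ℝ) : ℂ) ^ 2 = 2 := by
    norm_cast
    rw [Real.sq_sqrt] <;> norm_num
  have habsω : ‖ω‖ = 1 := by
    rw [hω, Complex.norm_exp]
    norm_num [Complex.mul_re, Complex.mul_im]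
  have hnsq : Complex.normSq ω = 1 := by
    rw [← Complex.sq_norm, habsω]; norm_num
  have hω0 : ω ≠ 0 := by
    intro h; rw [h] at habsω; simp at habsω
  have hconj : (starRingEnd ℂ) ω = ω⁻¹ := by
    rw [← Complex.norm_mul_exp_arg_mul_I ω, habsω]
    simp [← Complex.exp_conj, ← Complex.exp_neg, Complex.exp_ne_zero]
  have hne2 : ω ^ 2 - 2 * ω + 2 ≠ 0 := by
    intro h
    have hf : (ω - (1 + Complex.I)) * (ω - (1 - Complex.I)) = 0 := by
      rw [← h]; ring_nf; rw [Complex.I_sq]; ring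
    rcases mul_eq_zero.1 hf with h1 | h1
    · have h2 : ω = 1 + Complex.I := by linear_combination h1
      rw [h2] at hnsq; simp [Complex.normSq_apply] at hnsq
    · have h2 : ω = 1 - Complex.I := by linear_combination h1
      rw [h2] at hnsq; simp [Complex.normSq_apply] at hnsq
  have hL2D : lam ^ 2 * (1 - 2 * ω + 2 * ω ^ 2) =
      ω * ((1 - 2 * ω + ω ^ 2) - Complex.I * (1 - ω + ω ^ 2)) := by
    rw [hlam, div_mul_cancel₀ _ hden]
  have hc := congrArg (starRingEnd ℂ) hL2D
  simp only [map_mul, map_sub, map_add, map_one, map_ofNat, map_pow, Complex.conj_I,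
    hconj] at hc
  field_simp at hc
  have hw4 : (ω ^ 4 : ℂ) ≠ 0 := pow_ne_zero _ hω0
  have hc2 : (starRingEnd ℂ) lam ^ 2 * (ω ^ 2 - 2 * ω + 2) * ω =
      ω ^ 2 - 2 * ω + 1 + Complex.I * (ω ^ 2 - ω + 1) := by
    apply mul_right_cancel₀ hw4
    linear_combination ω ^ 4 * hc
  have hfac : (1 - 2 * ω + 2 * ω ^ 2) * (ω ^ 2 - 2 * ω + 2) * ω ≠ 0 :=
    mul_ne_zero (mul_ne_zero hden hne2) hω0
  have key : lam ^ 2 * (starRingEnd ℂ) lam ^ 2 = 1 := by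
    apply mul_right_cancel₀ hfac
    linear_combination ((starRingEnd ℂ) lam ^ 2 * (ω ^ 2 - 2 * ω + 2) * ω) * hL2D +
      (ω * ((1 - 2 * ω + ω ^ 2) - Complex.I * (1 - ω + ω ^ 2))) * hc2 +
      (-ω + 2 * ω ^ 2 - 3 * ω ^ 3 + 2 * ω ^ 4 - ω ^ 5) * Complex.I_sq
  have key2 : ((Complex.normSq lam : ℝ)) ^ 2 = 1 := by
    have h3 : ((Complex.normSq lam ^ 2 : ℝ) : ℂ) = 1 := by
      push_cast
      rw [← Complex.mul_conj]
      linear_combination key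
    exact_mod_cast h3
  have hn1 : Complex.normSq lam = 1 := by
    nlinarith [Complex.normSq_nonneg lam, key2]
  have habs : ‖lam‖ = 1 := by
    rw [Complex.norm_def, hn1, Real.sqrt_one]
  have hlam0 : lam ≠ 0 := by
    intro h; rw [h] at hn1; simp at hn1
  have hlt : lam * θ = ((Real.sqrt 2 : ℝ) : ℂ) * (-lam ^ 2 + ω * (1 - Complex.I) / 2) := by
    rw [hθ]; field_simp
  -- E1
  have h1 : (lam * ((Real.sqrt 2 : ℝ) : ℂ)) * (lam * (1 - 2 * ω + 2 * ω ^ 2)) =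
      (-θ * (2 - ω + Complex.I * ω)) * (lam * (1 - 2 * ω + 2 * ω ^ 2)) := by
    linear_combination ((2 - ω + Complex.I * ω) * (1 - 2 * ω + 2 * ω ^ 2)) * hlt +
      (((Real.sqrt 2 : ℝ) : ℂ) * (ω - 1 - Complex.I * ω)) * hL2D +
      (((Real.sqrt 2 : ℝ) : ℂ) * ω ^ 2 / 2) * Complex.I_sq
  have hE1 : lam * ((Real.sqrt 2 : ℝ) : ℂ) = -θ * (2 - ω + Complex.I * ω) :=
    mul_right_cancel₀ (mul_ne_zero hlam0 hden) h1
  -- E2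
  have h2 : (lam * θ * ((1 - ω) + Complex.I * ω) * ((Real.sqrt 2 : ℝ) : ℂ)) *
        (1 - 2 * ω + 2 * ω ^ 2) =
      (-ω * (1 - Complex.I)) * (1 - 2 * ω + 2 * ω ^ 2) := by
    linear_combination (((1 - ω) + Complex.I * ω) * ((Real.sqrt 2 : ℝ) : ℂ) *
        (1 - 2 * ω + 2 * ω ^ 2)) * hlt +
      ((-lam ^ 2 + ω * (1 - Complex.I) / 2) * ((1 - ω) + Complex.I * ω) *
        (1 - 2 * ω + 2 * ω ^ 2)) * hs2 +
      (-2 * ((1 - ω) + Complex.I * ω)) * hL2D + (ω ^ 2) * Complex.I_sq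
  have hE2 : lam * θ * ((1 - ω) + Complex.I * ω) * ((Real.sqrt 2 : ℝ) : ℂ) =
      -ω * (1 - Complex.I) := mul_right_cancel₀ hden h2
  -- θ²
  have hM : ω ^ 2 - 3 * ω + 1 - Complex.I * (ω ^ 2 - 1) ≠ 0 := by
    intro h
    have h1i : (1 - Complex.I) ≠ 0 := by
      intro h'
      have h'' := congrArg Complex.im h'
      simp at h''
    have hf : (ω - (1 + Complex.I)) * (ω - (1 + Complex.I) / 2) = 0 := by
      apply mul_left_cancel₀ h1i
      rw [mul_zero]
      linear_combination h + (3 * ω / 2 - (1 + Complex.I) / 2) * Complex.I_sq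
    rcases mul_eq_zero.1 hf with h3 | h3
    · have h4 : ω = 1 + Complex.I := by linear_combination h3
      rw [h4] at hnsq; simp [Complex.normSq_apply] at hnsq
    · have h4 : ω = (1 + Complex.I) / 2 := by linear_combination h3
      rw [h4] at hnsq; simp [Complex.normSq_apply] at hnsq; norm_num at hnsq
  have hθ2v : θ ^ 2 * lam ^ 2 = 2 * (-lam ^ 2 + ω * (1 - Complex.I) / 2) ^ 2 := by
    linear_combination (lam * θ + ((Real.sqrt 2 : ℝ) : ℂ) *
        (-lam ^ 2 + ω * (1 - Complex.I) / 2)) * hlt +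
      ((-lam ^ 2 + ω * (1 - Complex.I) / 2) ^ 2) * hs2
  have hMain : θ ^ 2 * lam ^ 2 * (ω ^ 2 - 3 * ω + 1 - Complex.I * (ω ^ 2 - 1)) *
        (1 - 2 * ω + 2 * ω ^ 2) ^ 2 =
      lam ^ 2 * ω * (1 - 2 * ω + 2 * ω ^ 2) ^ 2 := by
    linear_combination ((ω ^ 2 - 3 * ω + 1 - Complex.I * (ω ^ 2 - 1)) *
        (1 - 2 * ω + 2 * ω ^ 2) ^ 2) * hθ2v +
      (2 * (ω ^ 2 - 3 * ω + 1 - Complex.I * (ω ^ 2 - 1)) *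
          (lam ^ 2 * (1 - 2 * ω + 2 * ω ^ 2) +
            ω * ((1 - 2 * ω + ω ^ 2) - Complex.I * (1 - ω + ω ^ 2))) -
        2 * ω * (1 - Complex.I) * (ω ^ 2 - 3 * ω + 1 - Complex.I * (ω ^ 2 - 1)) *
          (1 - 2 * ω + 2 * ω ^ 2) -
        ω * (1 - 2 * ω + 2 * ω ^ 2)) * hL2D +
      (-ω ^ 2 / 2 + ω ^ 2 * Complex.I / 2 + ω ^ 3 / 2 + 3 * ω ^ 4 / 2 -
        ω ^ 4 * Complex.I / 2 - 2 * ω ^ 5) * Complex.I_sq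
  have h5 : θ ^ 2 * (ω ^ 2 - 3 * ω + 1 - Complex.I * (ω ^ 2 - 1)) *
        (1 - 2 * ω + 2 * ω ^ 2) ^ 2 = ω * (1 - 2 * ω + 2 * ω ^ 2) ^ 2 :=
    mul_left_cancel₀ (pow_ne_zero 2 hlam0) (by linear_combination hMain)
  have h6 : θ ^ 2 * (ω ^ 2 - 3 * ω + 1 - Complex.I * (ω ^ 2 - 1)) = ω :=
    mul_right_cancel₀ (pow_ne_zero 2 hden) (by linear_combination h5)
  have hθsq : θ ^ 2 = ω / (ω ^ 2 - 3 * ω + 1 - Complex.I * (ω ^ 2 - 1)) := by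
    rw [eq_div_iff hM]; exact h6
  refine ⟨habs, hθsq, ?_⟩
  apply eigen_part _ _ _ _ _ hs
  · rw [hβ]; linear_combination α * hE1
  · rw [hβ]; linear_combination (-α) * hE2
  · rw [hβ]; linear_combination (Complex.I * α) * hE1 + (-θ * α * ω) * Complex.I_sq
  · rw [hβ]; linear_combination (-Complex.I * α) * hE2 +
      (lam * θ * α * ((Real.sqrt 2 : ℝ) : ℂ) * ω - ω * α) * Complex.I_sq


end
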